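/- Let T1 = T(a1/b1, c1/d1) and T2 = T(a2/b2, c2/d2) be equivalent trees, where each of a1/b1, c1/d1, a2/b2, c2/d2 is a nonnegative fraction in lowest terms with a1/b1 ≤ c1/d1 and a2/b2 ≤ c2/d2. Then corresponding elements are the same weighted combination of their tree's initial terms: for every n and every index j, writing e1 for the j-th entry of S(n)(a1/b1, c1/d1) and e2 for the j-th entry of S(n)(a2/b2, c2/d2), there exist nonnegative integers x, y, not both zero, with gcd(x,y) = 1, and a positive integer g, such that g = gcd(a1·x + c1·y, b1·x + d1·y), num(e1)·g = a1·x + c1·y, den(e1)·g = b1·x + d1·y, and also g = gcd(a2·x + c2·y, b2·x + d2·y), num(e2)·g = a2·x + c2·y, den(e2)·g = b2·x + d2·y. -/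

import Mathlib

/-- The mediant of two rationals `p` and `q`: `(num p + num q) / (den p + den q)`. -/
def mediant (p q : ℚ) : ℚ := ((p.num + q.num : ℤ) : ℚ) / ((p.den + q.den : ℕ) : ℚ)

/-- Insert between every pair of consecutive entries of a list their mediant. -/
def insertMediants : List ℚ → List ℚ
  | [] => []
  | [p] => [p]
  | p :: q :: rest => p :: mediant p q :: insertMediants (q :: rest)

/-- The sequences of the tree `T(r, s)`: `S r s 0 = [r, s]`, and each successive
sequence is obtained by inserting mediants between consecutive entries. -/
def S (r s : ℚ) : ℕ → List ℚ
  | 0 => [r, s]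
  | n + 1 => insertMediants (S r s n)


/-- Two trees `T(r1, s1)` and `T(r2, s2)` are equivalent if the mediant inserted at each
position reduces by exactly the same factor in both trees: for every row `n` and every
`j`-th consecutive pair `(p, q)` of `S r1 s1 n` and `(p', q')` of `S r2 s2 n`,
`gcd (num p + num q) (den p + den q) = gcd (num p' + num q') (den p' + den q')`. -/
def TreesEquiv (r1 s1 r2 s2 : ℚ) : Prop :=
  ∀ n j, (h1 : j + 1 < (S r1 s1 n).length) → (h2 : j + 1 < (S r2 s2 n).length) →
    Int.gcd ((S r1 s1 n)[j].num + (S r1 s1 n)[j + 1].num)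
            (((S r1 s1 n)[j].den : ℤ) + ((S r1 s1 n)[j + 1].den : ℤ)) =
    Int.gcd ((S r2 s2 n)[j].num + (S r2 s2 n)[j + 1].num)
            (((S r2 s2 n)[j].den : ℤ) + ((S r2 s2 n)[j + 1].den : ℤ))

theorem insertMediants_length : ∀ l : List ℚ, (insertMediants l).length = 2 * l.length - 1
  | [] => rfl
  | [p] => rfl
  | p :: q :: rest => by
      have ih := insertMediants_length (q :: rest)
      simp only [insertMediants, List.length_cons] at *
      omega

theorem S_length (r s : ℚ) (n : ℕ) : (S r s n).length = 2 ^ n + 1 := by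
  induction n with
  | zero => rfl
  | succ n ih =>
      show (insertMediants (S r s n)).length = _
      rw [insertMediants_length, ih]
      have : 0 < 2 ^ n := Nat.pow_pos (by norm_num)
      ring_nf
      omega

theorem insertMediants_get_even : ∀ (l : List ℚ) (k : ℕ) (h : k < l.length)
    (h' : 2 * k < (insertMediants l).length),
    (insertMediants l)[2 * k] = l[k]
  | [], k, h, _ => absurd h (by simp)
  | [p], k, h, h' => by
      have hk : k = 0 := by simp at h; omega
      subst hk; rfl
  | p :: q :: rest, 0, h, h' => rfl
  | p :: q :: rest, k + 1, h, h' => by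
      have hlen := insertMediants_length (q :: rest)
      have hb1 : k < (q :: rest).length := by simp at h ⊢; omega
      have hb2 : 2 * k < (insertMediants (q :: rest)).length := by
        rw [hlen]; simp at hb1 ⊢; omega
      have ih := insertMediants_get_even (q :: rest) k hb1 hb2
      show (p :: mediant p q :: insertMediants (q :: rest))[2 * (k + 1)]'(by
        simpa [insertMediants] using h') = _
      simp only [show 2 * (k + 1) = 2 * k + 1 + 1 from by ring, List.getElem_cons_succ]
      exact ih

theorem insertMediants_get_odd : ∀ (l : List ℚ) (k : ℕ) (h : k + 1 < l.length)
    (h' : 2 * k + 1 < (insertMediants l).length),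
    (insertMediants l)[2 * k + 1] = mediant (l[k]'(by omega)) (l[k + 1]'h)
  | [], k, h, _ => absurd h (by simp)
  | [p], k, h, h' => by simp at h
  | p :: q :: rest, 0, h, h' => rfl
  | p :: q :: rest, k + 1, h, h' => by
      have hlen := insertMediants_length (q :: rest)
      have hb1 : k + 1 < (q :: rest).length := by simp at h ⊢; omega
      have hb2 : 2 * k + 1 < (insertMediants (q :: rest)).length := by
        rw [hlen]; simp at hb1 ⊢; omega
      have ih := insertMediants_get_odd (q :: rest) k hb1 hb2
      show (p :: mediant p q :: insertMediants (q :: rest))[2 * (k + 1) + 1]'(by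
        simpa [insertMediants] using h') = _
      simp only [show 2 * (k + 1) + 1 = 2 * k + 1 + 1 + 1 from by ring,
        List.getElem_cons_succ]
      exact ih

theorem num_den_div_gcd (m n : ℕ) (hn : 0 < n) :
    ((m : ℚ) / (n : ℚ)).num * (Nat.gcd m n : ℤ) = (m : ℤ) ∧
    ((m : ℚ) / (n : ℚ)).den * Nat.gcd m n = n := by
  set g := Nat.gcd m n with hg
  have hgpos : 0 < g := Nat.gcd_pos_of_pos_right _ hn
  have hdm : g ∣ m := Nat.gcd_dvd_left m n
  have hdn : g ∣ n := Nat.gcd_dvd_right m n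
  have hm : m / g * g = m := Nat.div_mul_cancel hdm
  have hn' : n / g * g = n := Nat.div_mul_cancel hdn
  have hcop : Nat.Coprime (m / g) (n / g) := Nat.coprime_div_gcd_div_gcd hgpos
  have hng : 0 < n / g := Nat.div_pos (Nat.le_of_dvd hn hdn) hgpos
  have heq : (m : ℚ) / (n : ℚ) = ((m / g : ℕ) : ℤ) / ((n / g : ℕ) : ℤ) := by
    rw [div_eq_div_iff (by exact_mod_cast hn.ne') (by push_cast; exact_mod_cast hng.ne')]
    push_cast
    have : m * (n / g) = m / g * n := by
      apply Nat.eq_of_mul_eq_mul_right hgpos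
      calc m * (n / g) * g = n / g * g * m := by ring
        _ = n * m := by rw [hn']
        _ = m / g * g * n := by rw [hm]; ring
        _ = m / g * n * g := by ring
    exact_mod_cast this
  have hb0 : (0 : ℤ) < ((n / g : ℕ) : ℤ) := by exact_mod_cast hng
  have habs : Nat.Coprime ((m / g : ℕ) : ℤ).natAbs ((n / g : ℕ) : ℤ).natAbs := by
    exact hcop
  have h1 := Rat.num_div_eq_of_coprime hb0 habs
  have h2 := Rat.den_div_eq_of_coprime hb0 habs
  rw [heq]
  constructor
  · rw [h1]; exact_mod_cast hm
  · have : (((m / g : ℕ) : ℤ) / ((n / g : ℕ) : ℤ) : ℚ).den = n / g := by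
      exact_mod_cast h2
    rw [this]; exact hn'

def W (a b c d : ℕ) (p : ℚ) (x y g : ℕ) : Prop :=
  ¬(x = 0 ∧ y = 0) ∧ Nat.gcd x y = 1 ∧ 0 < g ∧
  g = Nat.gcd (a * x + c * y) (b * x + d * y) ∧
  p.num * (g : ℤ) = ((a * x + c * y : ℕ) : ℤ) ∧ p.den * g = b * x + d * y

theorem W_left (a b c d : ℕ) (hb : 0 < b) (h : Nat.gcd a b = 1) :
    W a b c d ((a : ℚ) / (b : ℚ)) 1 0 1 := by
  obtain ⟨h1, h2⟩ := num_den_div_gcd a b hb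
  refine ⟨by simp, by simp, one_pos, by simpa using h.symm, ?_, ?_⟩
  · simpa [h] using h1
  · simpa [h] using h2

theorem W_right (a b c d : ℕ) (hd : 0 < d) (h : Nat.gcd c d = 1) :
    W a b c d ((c : ℚ) / (d : ℚ)) 0 1 1 := by
  obtain ⟨h1, h2⟩ := num_den_div_gcd c d hd
  refine ⟨by simp, by simp, one_pos, by simpa using h.symm, ?_, ?_⟩
  · simpa [h] using h1
  · simpa [h] using h2

theorem W_step (a b c d : ℕ) (hb : 0 < b) (hd : 0 < d) (p q : ℚ)
    (x1 y1 g1 x2 y2 g2 : ℕ)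
    (W1 : W a b c d p x1 y1 g1) (W2 : W a b c d q x2 y2 g2) :
    0 < Nat.gcd (x1 * g2 + x2 * g1) (y1 * g2 + y2 * g1) ∧
    ∃ G : ℕ,
      G * Nat.gcd (x1 * g2 + x2 * g1) (y1 * g2 + y2 * g1)
        = Int.gcd (p.num + q.num) ((p.den : ℤ) + (q.den : ℤ)) * (g1 * g2) ∧
      W a b c d (mediant p q)
        ((x1 * g2 + x2 * g1) / Nat.gcd (x1 * g2 + x2 * g1) (y1 * g2 + y2 * g1))
        ((y1 * g2 + y2 * g1) / Nat.gcd (x1 * g2 + x2 * g1) (y1 * g2 + y2 * g1)) G := by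
  obtain ⟨hxy1, hcop1, hg1, hgcd1, hnum1, hden1⟩ := W1
  obtain ⟨hxy2, hcop2, hg2, hgcd2, hnum2, hden2⟩ := W2
  have hpn : 0 ≤ p.num := by
    by_contra h
    push_neg at h
    have h2 : p.num * (g1 : ℤ) < 0 :=
      mul_neg_of_neg_of_pos h (by exact_mod_cast hg1)
    rw [hnum1] at h2
    exact absurd h2 (not_lt.mpr (by positivity))
  have hqn : 0 ≤ q.num := by
    by_contra h
    push_neg at h
    have h2 : q.num * (g2 : ℤ) < 0 :=
      mul_neg_of_neg_of_pos h (by exact_mod_cast hg2)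
    rw [hnum2] at h2
    exact absurd h2 (not_lt.mpr (by positivity))
  set np := p.num.toNat with hnpdef
  set nq := q.num.toNat with hnqdef
  have hpn' : p.num = (np : ℤ) := (Int.toNat_of_nonneg hpn).symm
  have hqn' : q.num = (nq : ℤ) := (Int.toNat_of_nonneg hqn).symm
  have hnum1' : np * g1 = a * x1 + c * y1 := by
    have h := hnum1; rw [hpn'] at h; exact_mod_cast h
  have hnum2' : nq * g2 = a * x2 + c * y2 := by
    have h := hnum2; rw [hqn'] at h; exact_mod_cast h
  set u := x1 * g2 + x2 * g1 with hu
  set v := y1 * g2 + y2 * g1 with hv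
  set e := Nat.gcd u v with he
  have hx1y1 : 0 < x1 ∨ 0 < y1 := by
    rcases Nat.eq_zero_or_pos x1 with h | h
    · exact Or.inr (Nat.pos_of_ne_zero (fun h' => hxy1 ⟨h, h'⟩))
    · exact Or.inl h
  have huv : 0 < u + v := by
    rcases hx1y1 with h | h
    · have : 0 < x1 * g2 := Nat.mul_pos h hg2
      omega
    · have : 0 < y1 * g2 := Nat.mul_pos h hg2
      omega
  have hepos : 0 < e := by
    rcases Nat.eq_zero_or_pos u with h | h
    · exact Nat.gcd_pos_of_pos_right _ (by omega)
    · exact Nat.gcd_pos_of_pos_left _ h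
  set X := u / e with hX
  set Y := v / e with hY
  have hXe : X * e = u := Nat.div_mul_cancel (Nat.gcd_dvd_left u v)
  have hYe : Y * e = v := Nat.div_mul_cancel (Nat.gcd_dvd_right u v)
  have hcop : Nat.Coprime X Y := Nat.coprime_div_gcd_div_gcd hepos
  have hXY0 : ¬(X = 0 ∧ Y = 0) := by
    rintro ⟨h1, h2⟩
    rw [h1, zero_mul] at hXe
    rw [h2, zero_mul] at hYe
    omega
  have k1 : (np + nq) * (g1 * g2) = e * (a * X + c * Y) := by
    calc (np + nq) * (g1 * g2) = np * g1 * g2 + nq * g2 * g1 := by ring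
      _ = (a * x1 + c * y1) * g2 + (a * x2 + c * y2) * g1 := by rw [hnum1', hnum2']
      _ = a * u + c * v := by rw [hu, hv]; ring
      _ = a * (X * e) + c * (Y * e) := by rw [hXe, hYe]
      _ = e * (a * X + c * Y) := by ring
  have k2 : (p.den + q.den) * (g1 * g2) = e * (b * X + d * Y) := by
    calc (p.den + q.den) * (g1 * g2) = p.den * g1 * g2 + q.den * g2 * g1 := by ring
      _ = (b * x1 + d * y1) * g2 + (b * x2 + d * y2) * g1 := by rw [hden1, hden2]
      _ = b * u + d * v := by rw [hu, hv]; ring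
      _ = b * (X * e) + d * (Y * e) := by rw [hXe, hYe]
      _ = e * (b * X + d * Y) := by ring
  set G := Nat.gcd (a * X + c * Y) (b * X + d * Y) with hG
  have hkey : Nat.gcd (np + nq) (p.den + q.den) * (g1 * g2) = e * G := by
    rw [← Nat.gcd_mul_right, k1, k2, Nat.gcd_mul_left]
  have hXYpos : 0 < X ∨ 0 < Y := by
    rcases Nat.eq_zero_or_pos X with h | h
    · exact Or.inr (Nat.pos_of_ne_zero (fun h' => hXY0 ⟨h, h'⟩))
    · exact Or.inl h
  have hBpos : 0 < b * X + d * Y := by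
    have h1 : X ≤ b * X := Nat.le_mul_of_pos_left X hb
    have h2 : Y ≤ d * Y := Nat.le_mul_of_pos_left Y hd
    omega
  have hGpos : 0 < G := Nat.gcd_pos_of_pos_right _ hBpos
  have hmed : mediant p q = ((np + nq : ℕ) : ℚ) / ((p.den + q.den : ℕ) : ℚ) := by
    rw [mediant, hpn', hqn']
    push_cast
    ring
  have hdenpos : 0 < p.den + q.den := by
    have := p.pos
    omega
  obtain ⟨hm1, hm2⟩ := num_den_div_gcd (np + nq) (p.den + q.den) hdenpos
  rw [← hmed] at hm1 hm2
  have hgcdInt : Int.gcd (p.num + q.num) ((p.den : ℤ) + (q.den : ℤ))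
      = Nat.gcd (np + nq) (p.den + q.den) := by
    rw [hpn', hqn',
      show ((np : ℤ) + (nq : ℤ)) = ((np + nq : ℕ) : ℤ) from by push_cast; ring,
      show ((p.den : ℤ) + (q.den : ℤ)) = ((p.den + q.den : ℕ) : ℤ) from by push_cast; ring]
    exact Int.gcd_natCast_natCast _ _
  have hnumG : (mediant p q).num * (G : ℤ) = ((a * X + c * Y : ℕ) : ℤ) := by
    have hk : (Nat.gcd (np + nq) (p.den + q.den) : ℤ) * ((g1 : ℤ) * (g2 : ℤ))
        = (e : ℤ) * (G : ℤ) := by exact_mod_cast hkey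
    have hk1 : ((np + nq : ℕ) : ℤ) * ((g1 : ℤ) * (g2 : ℤ))
        = (e : ℤ) * ((a * X + c * Y : ℕ) : ℤ) := by exact_mod_cast k1
    have h1 : (mediant p q).num * (G : ℤ) * (e : ℤ)
        = ((a * X + c * Y : ℕ) : ℤ) * (e : ℤ) := by
      calc (mediant p q).num * (G : ℤ) * (e : ℤ)
          = (mediant p q).num * ((e : ℤ) * (G : ℤ)) := by ring
        _ = (mediant p q).num * ((Nat.gcd (np + nq) (p.den + q.den) : ℤ)
              * ((g1 : ℤ) * (g2 : ℤ))) := by rw [hk]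
        _ = (mediant p q).num * (Nat.gcd (np + nq) (p.den + q.den) : ℤ)
              * ((g1 : ℤ) * (g2 : ℤ)) := by ring
        _ = ((np + nq : ℕ) : ℤ) * ((g1 : ℤ) * (g2 : ℤ)) := by rw [hm1]
        _ = (e : ℤ) * ((a * X + c * Y : ℕ) : ℤ) := hk1
        _ = ((a * X + c * Y : ℕ) : ℤ) * (e : ℤ) := by ring
    exact mul_right_cancel₀ (by exact_mod_cast hepos.ne' : (e : ℤ) ≠ 0) h1
  have hdenG : (mediant p q).den * G = b * X + d * Y := by
    apply Nat.eq_of_mul_eq_mul_right hepos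
    calc (mediant p q).den * G * e = (mediant p q).den * (e * G) := by ring
      _ = (mediant p q).den * (Nat.gcd (np + nq) (p.den + q.den) * (g1 * g2)) := by
          rw [hkey]
      _ = (mediant p q).den * Nat.gcd (np + nq) (p.den + q.den) * (g1 * g2) := by ring
      _ = (p.den + q.den) * (g1 * g2) := by rw [hm2]
      _ = e * (b * X + d * Y) := k2
      _ = (b * X + d * Y) * e := by ring
  refine ⟨hepos, G, ?_, hXY0, hcop, hGpos, hG, hnumG, hdenG⟩
  rw [hgcdInt, hkey]
  ring


theorem main_ind (a1 b1 c1 d1 a2 b2 c2 d2 : ℕ)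
    (hb1 : 0 < b1) (hd1 : 0 < d1) (hb2 : 0 < b2) (hd2 : 0 < d2)
    (h1 : Nat.gcd a1 b1 = 1) (h2 : Nat.gcd c1 d1 = 1)
    (h3 : Nat.gcd a2 b2 = 1) (h4 : Nat.gcd c2 d2 = 1)
    (hequiv : TreesEquiv ((a1 : ℚ) / b1) ((c1 : ℚ) / d1) ((a2 : ℚ) / b2) ((c2 : ℚ) / d2)) :
    ∀ n j (hj1 : j < (S ((a1 : ℚ) / b1) ((c1 : ℚ) / d1) n).length)
      (hj2 : j < (S ((a2 : ℚ) / b2) ((c2 : ℚ) / d2) n).length),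
      ∃ x y g : ℕ, W a1 b1 c1 d1 ((S ((a1 : ℚ) / b1) ((c1 : ℚ) / d1) n)[j]) x y g ∧
                   W a2 b2 c2 d2 ((S ((a2 : ℚ) / b2) ((c2 : ℚ) / d2) n)[j]) x y g := by
  set r1 : ℚ := (a1 : ℚ) / b1 with hr1
  set s1 : ℚ := (c1 : ℚ) / d1 with hs1
  set r2 : ℚ := (a2 : ℚ) / b2 with hr2
  set s2 : ℚ := (c2 : ℚ) / d2 with hs2
  intro n
  induction n with
  | zero =>
    intro j hj1 hj2
    have hj : j < 2 := by simpa [S] using hj1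
    interval_cases j
    · exact ⟨1, 0, 1, by simpa [S] using W_left a1 b1 c1 d1 hb1 h1,
        by simpa [S] using W_left a2 b2 c2 d2 hb2 h3⟩
    · exact ⟨0, 1, 1, by simpa [S] using W_right a1 b1 c1 d1 hd1 h2,
        by simpa [S] using W_right a2 b2 c2 d2 hd2 h4⟩
  | succ n ih =>
    intro j hj1 hj2
    have hp2 : (2 : ℕ) ^ (n + 1) = 2 * 2 ^ n := by rw [pow_succ]; ring
    have hl1 : (S r1 s1 n).length = 2 ^ n + 1 := S_length r1 s1 n
    have hl2 : (S r2 s2 n).length = 2 ^ n + 1 := S_length r2 s2 n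
    have hL1 : (S r1 s1 (n + 1)).length = 2 ^ (n + 1) + 1 := S_length r1 s1 (n + 1)
    have hL2 : (S r2 s2 (n + 1)).length = 2 ^ (n + 1) + 1 := S_length r2 s2 (n + 1)
    rcases Nat.even_or_odd j with ⟨k, hk⟩ | ⟨k, hk⟩
    · -- even case : j = k + k
      have hk1 : k < (S r1 s1 n).length := by rw [hl1]; rw [hL1] at hj1; omega
      have hk2 : k < (S r2 s2 n).length := by rw [hl2]; rw [hL2] at hj2; omega
      obtain ⟨x, y, g, W1, W2⟩ := ih k hk1 hk2
      have e1 : (S r1 s1 (n + 1))[j]'hj1 = (S r1 s1 n)[k]'hk1 := by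
        have hb : 2 * k < (insertMediants (S r1 s1 n)).length := by
          show 2 * k < (S r1 s1 (n + 1)).length
          rw [hL1]; omega
        have := insertMediants_get_even (S r1 s1 n) k hk1 hb
        simp only [show j = 2 * k from by omega]
        exact this
      have e2 : (S r2 s2 (n + 1))[j]'hj2 = (S r2 s2 n)[k]'hk2 := by
        have hb : 2 * k < (insertMediants (S r2 s2 n)).length := by
          show 2 * k < (S r2 s2 (n + 1)).length
          rw [hL2]; omega
        have := insertMediants_get_even (S r2 s2 n) k hk2 hb
        simp only [show j = 2 * k from by omega]
        exact this
      exact ⟨x, y, g, e1 ▸ W1, e2 ▸ W2⟩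
    · -- odd case : j = 2 * k + 1
      have hk1 : k + 1 < (S r1 s1 n).length := by rw [hl1]; rw [hL1] at hj1; omega
      have hk2 : k + 1 < (S r2 s2 n).length := by rw [hl2]; rw [hL2] at hj2; omega
      have hk1' : k < (S r1 s1 n).length := by omega
      have hk2' : k < (S r2 s2 n).length := by omega
      obtain ⟨x1, y1, g1, Wp1, Wp2⟩ := ih k hk1' hk2'
      obtain ⟨x2, y2, g2, Wq1, Wq2⟩ := ih (k + 1) hk1 hk2
      obtain ⟨hepos, G1, hGe1, WM1⟩ :=
        W_step a1 b1 c1 d1 hb1 hd1 ((S r1 s1 n)[k]'hk1') ((S r1 s1 n)[k + 1]'hk1)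
          x1 y1 g1 x2 y2 g2 Wp1 Wq1
      obtain ⟨-, G2, hGe2, WM2⟩ :=
        W_step a2 b2 c2 d2 hb2 hd2 ((S r2 s2 n)[k]'hk2') ((S r2 s2 n)[k + 1]'hk2)
          x1 y1 g1 x2 y2 g2 Wp2 Wq2
      have hgg := hequiv n k hk1 hk2
      have hG12 : G1 = G2 := by
        apply Nat.eq_of_mul_eq_mul_right hepos
        rw [hGe1, hGe2, hgg]
      have e1 : (S r1 s1 (n + 1))[j]'hj1
          = mediant ((S r1 s1 n)[k]'hk1') ((S r1 s1 n)[k + 1]'hk1) := by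
        have hb : 2 * k + 1 < (insertMediants (S r1 s1 n)).length := by
          show 2 * k + 1 < (S r1 s1 (n + 1)).length
          rw [hL1]; omega
        have := insertMediants_get_odd (S r1 s1 n) k hk1 hb
        simp only [show j = 2 * k + 1 from by omega]
        exact this
      have e2 : (S r2 s2 (n + 1))[j]'hj2
          = mediant ((S r2 s2 n)[k]'hk2') ((S r2 s2 n)[k + 1]'hk2) := by
        have hb : 2 * k + 1 < (insertMediants (S r2 s2 n)).length := by
          show 2 * k + 1 < (S r2 s2 (n + 1)).length
          rw [hL2]; omega
        have := insertMediants_get_odd (S r2 s2 n) k hk2 hb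
        simp only [show j = 2 * k + 1 from by omega]
        exact this
      refine ⟨_, _, G1, e1 ▸ WM1, e2 ▸ ?_⟩
      rw [hG12]
      exact WM2

/-- In equivalent trees, corresponding elements are the same weighted combination of
their respective initial terms: for corresponding entries `e1, e2` there are coprime
weights `(x, y)`, not both zero, and a common reduction factor
`g = gcd (a1 x + c1 y) (b1 x + d1 y) = gcd (a2 x + c2 y) (b2 x + d2 y)` with
`num e1 * g = a1 x + c1 y`, `den e1 * g = b1 x + d1 y`, and similarly for `e2`. -/
theorem equiv_trees_corresponding_elements_same_weights
    (a1 b1 c1 d1 a2 b2 c2 d2 : ℕ)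
    (hb1 : 0 < b1) (hd1 : 0 < d1) (hb2 : 0 < b2) (hd2 : 0 < d2)
    (h1 : Nat.gcd a1 b1 = 1) (h2 : Nat.gcd c1 d1 = 1)
    (h3 : Nat.gcd a2 b2 = 1) (h4 : Nat.gcd c2 d2 = 1)
    (hle1 : (a1 : ℚ) / b1 ≤ (c1 : ℚ) / d1) (hle2 : (a2 : ℚ) / b2 ≤ (c2 : ℚ) / d2)
    (hequiv : TreesEquiv ((a1 : ℚ) / b1) ((c1 : ℚ) / d1) ((a2 : ℚ) / b2) ((c2 : ℚ) / d2))
    (n j : ℕ)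
    (hj1 : j < (S ((a1 : ℚ) / b1) ((c1 : ℚ) / d1) n).length)
    (hj2 : j < (S ((a2 : ℚ) / b2) ((c2 : ℚ) / d2) n).length) :
    ∃ x y g : ℕ, ¬(x = 0 ∧ y = 0) ∧ Nat.gcd x y = 1 ∧ 0 < g ∧
      g = Nat.gcd (a1 * x + c1 * y) (b1 * x + d1 * y) ∧
      (S ((a1 : ℚ) / b1) ((c1 : ℚ) / d1) n)[j].num * (g : ℤ) =
        ((a1 * x + c1 * y : ℕ) : ℤ) ∧
      (S ((a1 : ℚ) / b1) ((c1 : ℚ) / d1) n)[j].den * g = b1 * x + d1 * y ∧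
      g = Nat.gcd (a2 * x + c2 * y) (b2 * x + d2 * y) ∧
      (S ((a2 : ℚ) / b2) ((c2 : ℚ) / d2) n)[j].num * (g : ℤ) =
        ((a2 * x + c2 * y : ℕ) : ℤ) ∧
      (S ((a2 : ℚ) / b2) ((c2 : ℚ) / d2) n)[j].den * g = b2 * x + d2 * y := by
  obtain ⟨x, y, g, ⟨hxy, hcop, hg, hg1, hn1, hd1'⟩, ⟨-, -, -, hg2, hn2, hd2'⟩⟩ :=
    main_ind a1 b1 c1 d1 a2 b2 c2 d2 hb1 hd1 hb2 hd2 h1 h2 h3 h4 hequiv n j hj1 hj2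
  exact ⟨x, y, g, hxy, hcop, hg, hg1, hn1, hd1', hg2, hn2, hd2'⟩
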